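/- Let n = 3 with r_1 ≥ 2, or n ≥ 4. Then the quotient of the free abelian group ℤ^{d+n} by the subgroup generated by the vectors w_e, where e ranges over all edges of the complete multipartite graph K_{r_1,…,r_n}, is isomorphic to ℤ^n as an abelian group. (This quotient computes the divisor class group of the edge ring k[K_{r_1,…,r_n}], so Cl(k[K_{r_1,…,r_n}]) ≅ ℤ^n.) -/

import Mathlib

/-- The vector `w_e ∈ ℤ^d ⊕ ℤ^n` associated to the edge `e = {a,b}` of the complete
multipartite graph whose block assignment is `blk`: its `ℤ^d`-component is `e_a + e_b`
and its `ℤ^n`-component is the sum of the unit vectors `e_k` over blocks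
`k ∉ {blk a, blk b}`. -/
def wvec (n d : ℕ) (blk : Fin d → ℕ) (a b : Fin d) : (Fin d → ℤ) × (Fin n → ℤ) :=
  (fun k => (if k = a then 1 else 0) + (if k = b then 1 else 0),
   fun i => if (i : ℕ) = blk a ∨ (i : ℕ) = blk b then 0 else 1)

namespace StmtAux

variable {n d : ℕ}

/-- generator `(e_a, 0)` -/
def gxv (n : ℕ) {d : ℕ} (a : Fin d) : (Fin d → ℤ) × (Fin n → ℤ) := (Pi.single a 1, 0)

/-- generator `(0, e_i)` -/
def gyv (d : ℕ) {n : ℕ} (i : Fin n) : (Fin d → ℤ) × (Fin n → ℤ) := (0, Pi.single i 1)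

def phif (blk : Fin d → ℕ) (i0 : Fin n) (p : (Fin d → ℤ) × (Fin n → ℤ)) : Fin n → ℤ :=
  fun m =>
    if (m : ℕ) = 0 then (∑ c, (if blk c = 0 then (-1:ℤ) else 1) * p.1 c) - 2 * p.2 i0
    else (∑ c, (if blk c = (m:ℕ) then (1:ℤ) else if blk c = 0 then -1 else 0) * p.1 c)
      + p.2 m - p.2 i0

lemma phif_add (blk : Fin d → ℕ) (i0 : Fin n) (p q : (Fin d → ℤ) × (Fin n → ℤ)) :
    phif blk i0 (p + q) = phif blk i0 p + phif blk i0 q := by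
  funext m
  simp only [phif, Prod.fst_add, Prod.snd_add, Pi.add_apply, mul_add,
    Finset.sum_add_distrib]
  split_ifs <;> ring

def phiHom (blk : Fin d → ℕ) (i0 : Fin n) :
    ((Fin d → ℤ) × (Fin n → ℤ)) →+ (Fin n → ℤ) :=
  AddMonoidHom.mk' (phif blk i0) (phif_add blk i0)

lemma phiHom_gx (blk : Fin d → ℕ) (i0 : Fin n) (hi0 : (i0 : ℕ) = 0) (a : Fin d) :
    phiHom blk i0 (gxv n a) = fun m : Fin n =>
      if (m : ℕ) = 0 then (if blk a = 0 then -1 else 1)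
      else (if blk a = (m:ℕ) then 1 else if blk a = 0 then -1 else 0) := by
  funext m
  show phif blk i0 (gxv n a) m = _
  simp [phif, gxv, Pi.single_apply, mul_ite, Finset.sum_ite_eq']

lemma phiHom_gy (blk : Fin d → ℕ) (i0 : Fin n) (hi0 : (i0 : ℕ) = 0) (i : Fin n) :
    phiHom blk i0 (gyv d i) = fun m : Fin n =>
      if (m : ℕ) = 0 then -2 * (if (i:ℕ) = 0 then 1 else 0)
      else (if m = i then 1 else 0) - (if (i:ℕ) = 0 then 1 else 0) := by
  funext m
  show phif blk i0 (gyv d i) m = _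
  have h1 : (Pi.single i (1:ℤ) : Fin n → ℤ) i0 = if (i:ℕ) = 0 then 1 else 0 := by
    rw [Pi.single_apply]
    simp [Fin.ext_iff, hi0, eq_comm]
  have h2 : (i0 = i) ↔ ((i:ℕ) = 0) := by simp [Fin.ext_iff, hi0, eq_comm]
  simp only [phif, gyv, Pi.single_apply, h1, Prod.fst, Prod.snd]
  simp only [if_congr h2 rfl rfl]
  split_ifs <;> simp

end StmtAux

namespace StmtAux

variable {n d : ℕ}

lemma phiHom_gx0 (blk : Fin d → ℕ) (i0 : Fin n) (hi0 : (i0 : ℕ) = 0)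
    (a : Fin d) (ha : blk a = 0) :
    phiHom blk i0 (gxv n a) = fun _ => (-1 : ℤ) := by
  rw [phiHom_gx blk i0 hi0 a]
  funext m
  simp only [ha]
  split_ifs <;> omega

lemma phiHom_gxi (blk : Fin d → ℕ) (i0 : Fin n) (hi0 : (i0 : ℕ) = 0)
    (a : Fin d) (ha : blk a ≠ 0) (hlt : blk a < n) :
    phiHom blk i0 (gxv n a) = Pi.single i0 1 + Pi.single (⟨blk a, hlt⟩ : Fin n) 1 := by
  rw [phiHom_gx blk i0 hi0 a]
  funext m
  simp only [Pi.add_apply, Pi.single_apply, Fin.ext_iff, hi0]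
  split_ifs <;> omega

lemma phiHom_gyi (blk : Fin d → ℕ) (i0 : Fin n) (hi0 : (i0 : ℕ) = 0)
    (i : Fin n) (hi : i ≠ i0) :
    phiHom blk i0 (gyv d i) = Pi.single i 1 := by
  rw [phiHom_gy blk i0 hi0 i]
  have hi' : (i : ℕ) ≠ 0 := by
    intro h; exact hi (Fin.ext (by rw [h, hi0]))
  funext m
  simp only [Pi.single_apply, Fin.ext_iff, hi0, if_neg hi']
  split_ifs <;> omega

lemma phiHom_gy0 (blk : Fin d → ℕ) (i0 : Fin n) (hi0 : (i0 : ℕ) = 0) :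
    phiHom blk i0 (gyv d i0) = (fun _ => (-1:ℤ)) - Pi.single i0 1 := by
  rw [phiHom_gy blk i0 hi0 i0]
  funext m
  simp only [Pi.sub_apply, Pi.single_apply, Fin.ext_iff, hi0, if_pos rfl]
  split_ifs <;> omega

lemma gyv_erase_sum (i0 : Fin n) :
    (∑ j ∈ Finset.univ.erase i0, gyv d j)
      = ((0 : Fin d → ℤ), fun m => if m = i0 then (0:ℤ) else 1) := by
  refine Prod.ext ?_ ?_
  · rw [Prod.fst_sum]; simp [gyv]
  · rw [Prod.snd_sum]
    funext m
    rw [Finset.sum_apply]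
    simp only [gyv, Pi.single_apply]
    rw [Finset.sum_ite_eq]
    simp only [Finset.mem_erase, Finset.mem_univ, and_true]
    split_ifs <;> simp_all

def vqv (d : ℕ) {n : ℕ} (i0 : Fin n) (a0 : Fin d) : Fin n → (Fin d → ℤ) × (Fin n → ℤ) :=
  fun k => if k = i0 then -gxv n a0 - ∑ j ∈ Finset.univ.erase i0, gyv d j else gyv d k

def rhof (i0 : Fin n) (a0 : Fin d) (c : Fin n → ℤ) : (Fin d → ℤ) × (Fin n → ℤ) :=
  ∑ k, c k • vqv d i0 a0 k

lemma rhof_add (i0 : Fin n) (a0 : Fin d) (p q : Fin n → ℤ) :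
    rhof i0 a0 (p + q) = rhof i0 a0 p + rhof i0 a0 q := by
  simp only [rhof, Pi.add_apply, add_smul, Finset.sum_add_distrib]

def rhoHom (i0 : Fin n) (a0 : Fin d) : (Fin n → ℤ) →+ ((Fin d → ℤ) × (Fin n → ℤ)) :=
  AddMonoidHom.mk' (rhof i0 a0) (rhof_add i0 a0)

lemma sum_vqv (i0 : Fin n) (a0 : Fin d) : ∑ k, vqv d i0 a0 k = -gxv n a0 := by
  rw [← Finset.add_sum_erase _ _ (Finset.mem_univ i0)]
  have h1 : vqv d i0 a0 i0 = -gxv n a0 - ∑ j ∈ Finset.univ.erase i0, gyv d j :=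
    if_pos rfl
  have h2 : ∑ k ∈ Finset.univ.erase i0, vqv d i0 a0 k
      = ∑ k ∈ Finset.univ.erase i0, gyv d k :=
    Finset.sum_congr rfl fun k hk => if_neg (Finset.mem_erase.mp hk).1
  rw [h1, h2]; abel

lemma rhoHom_single (i0 : Fin n) (a0 : Fin d) (k : Fin n) :
    rhoHom i0 a0 (Pi.single k 1) = vqv d i0 a0 k := by
  show rhof i0 a0 (Pi.single k 1) = _
  simp only [rhof, Pi.single_apply, ite_smul, one_smul, zero_smul]
  rw [Finset.sum_ite_eq']
  simp

lemma rhoHom_neg_one (i0 : Fin n) (a0 : Fin d) :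
    rhoHom i0 a0 (fun _ => (-1:ℤ)) = gxv n a0 := by
  show rhof i0 a0 (fun _ => (-1:ℤ)) = _
  have : ∀ k, (-1:ℤ) • vqv d i0 a0 k = -vqv d i0 a0 k := fun k => neg_one_smul ℤ _
  simp only [rhof, this]
  rw [Finset.sum_neg_distrib, sum_vqv, neg_neg]

end StmtAux

namespace StmtAux

variable {n d : ℕ}

lemma idA (blk : Fin d → ℕ) (a0 b1 a : Fin d)
    (ha0 : blk a0 = 0) (hb1 : blk b1 = 1) (ha : blk a = 0) :
    gxv n a0 - gxv n a = wvec n d blk a0 b1 - wvec n d blk a b1 := by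
  refine Prod.ext ?_ ?_
  · funext k
    simp only [Prod.fst_sub, Pi.sub_apply, gxv, wvec, Pi.single_apply]
    split_ifs <;> ring
  · funext m
    simp only [Prod.snd_sub, Pi.sub_apply, gxv, wvec, ha0, hb1, ha]
    ring

lemma idC (blk : Fin d → ℕ) (i0 : Fin n) (hi0 : (i0 : ℕ) = 0) (a0 b1 c2 : Fin d)
    (ha0 : blk a0 = 0) (hb1 : blk b1 = 1) (hc2 : blk c2 = 2) :
    gxv n a0 + gxv n a0 + (∑ j ∈ Finset.univ.erase i0, gyv d j) - gyv d i0
      = wvec n d blk a0 b1 - wvec n d blk b1 c2 + wvec n d blk a0 c2 := by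
  rw [gyv_erase_sum]
  refine Prod.ext ?_ ?_
  · funext k
    simp only [Prod.fst_add, Prod.fst_sub, Pi.add_apply, Pi.sub_apply, gxv, gyv, wvec,
      Pi.single_apply, Pi.zero_apply]
    split_ifs <;> ring
  · funext m
    simp only [Prod.snd_add, Prod.snd_sub, Pi.add_apply, Pi.sub_apply, gxv, gyv, wvec,
      Pi.single_apply, Pi.zero_apply, ha0, hb1, hc2, Fin.ext_iff, hi0]
    split_ifs <;> omega

lemma idB (blk : Fin d → ℕ) (i0 : Fin n) (hi0 : (i0 : ℕ) = 0) (a0 b1 c2 a c : Fin d)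
    (ha0 : blk a0 = 0) (hb1 : blk b1 = 1) (hc2 : blk c2 = 2)
    (ha : blk a ≠ 0) (hlt : blk a < n) (hc0 : blk c ≠ 0) (hca : blk c ≠ blk a) :
    gxv n a + gxv n a0 + (∑ j ∈ Finset.univ.erase i0, gyv d j)
        - gyv d (⟨blk a, hlt⟩ : Fin n)
      = wvec n d blk a c - wvec n d blk a0 c + wvec n d blk a0 b1
          - wvec n d blk b1 c2 + wvec n d blk a0 c2 := by
  rw [gyv_erase_sum]
  refine Prod.ext ?_ ?_
  · funext k
    simp only [Prod.fst_add, Prod.fst_sub, Pi.add_apply, Pi.sub_apply, gxv, gyv, wvec,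
      Pi.single_apply, Pi.zero_apply]
    split_ifs <;> ring
  · funext m
    simp only [Prod.snd_add, Prod.snd_sub, Pi.add_apply, Pi.sub_apply, gxv, gyv, wvec,
      Pi.single_apply, Pi.zero_apply, ha0, hb1, hc2, Fin.ext_iff, hi0]
    split_ifs <;> omega

end StmtAux

namespace StmtAux

lemma decomp {n d : ℕ} (v : (Fin d → ℤ) × (Fin n → ℤ)) :
    v = ∑ a, v.1 a • gxv n a + ∑ i, v.2 i • gyv d i := by
  refine Prod.ext ?_ ?_
  · rw [Prod.fst_add, Prod.fst_sum, Prod.fst_sum]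
    funext k
    simp [gxv, gyv, Prod.smul_fst, Finset.sum_apply, Pi.single_apply, mul_ite,
      Finset.sum_ite_eq']
  · rw [Prod.snd_add, Prod.snd_sum, Prod.snd_sum]
    funext m
    simp [gxv, gyv, Prod.smul_snd, Finset.sum_apply, Pi.single_apply, mul_ite,
      Finset.sum_ite_eq']

end StmtAux

namespace StmtAux

lemma phiHom_wvec {n d : ℕ} (blk : Fin d → ℕ) (i0 : Fin n) (hi0 : (i0 : ℕ) = 0)
    (a b : Fin d) (hab : blk a ≠ blk b) :
    phiHom blk i0 (wvec n d blk a b) = 0 := by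
  funext m
  show phif blk i0 (wvec n d blk a b) m = 0
  have hy : ∀ m' : Fin n, (wvec n d blk a b).2 m'
      = if (m' : ℕ) = blk a ∨ (m' : ℕ) = blk b then 0 else 1 := fun _ => rfl
  simp only [phif, wvec, mul_add, Finset.sum_add_distrib, mul_ite, mul_one, mul_zero,
    Finset.sum_ite_eq', Finset.mem_univ, if_true, hy, hi0]
  split_ifs <;> omega

end StmtAux

open StmtAux

/-- Theorem (class group of the edge ring of a complete multipartite graph):
if `n = 3` with `r 0 ≥ 2`, or `n ≥ 4`, then `ℤ^{d+n}` modulo the subgroup generated by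
the vectors `w_e`, `e` an edge of `K_{r_1,…,r_n}`, is isomorphic to `ℤ^n`. -/
theorem stmt_0 (n : ℕ) (hn : 1 ≤ n) (r : ℕ → ℕ)
    (hr1 : ∀ i < n, 1 ≤ r i)
    (hmono : ∀ i j, i ≤ j → j < n → r i ≤ r j)
    (d : ℕ) (hd : d = ∑ i ∈ Finset.range n, r i)
    (blk : Fin d → ℕ) (hblkn : ∀ a, blk a < n)
    (hcard : ∀ i < n, (Finset.univ.filter (fun a : Fin d => blk a = i)).card = r i)
    (hcase : (n = 3 ∧ 2 ≤ r 0) ∨ 4 ≤ n) :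
    Nonempty ((((Fin d → ℤ) × (Fin n → ℤ)) ⧸
      AddSubgroup.closure {v | ∃ a b : Fin d, blk a ≠ blk b ∧ v = wvec n d blk a b})
      ≃+ (Fin n → ℤ)) := by
  classical
  have hn3 : 3 ≤ n := by rcases hcase with ⟨h3, _⟩ | h4 <;> omega
  set L : AddSubgroup ((Fin d → ℤ) × (Fin n → ℤ)) :=
    AddSubgroup.closure {v | ∃ a b : Fin d, blk a ≠ blk b ∧ v = wvec n d blk a b} with hL
  have hex : ∀ i, i < n → ∃ a : Fin d, blk a = i := by
    intro i hi
    have hc := hcard i hi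
    have hr := hr1 i hi
    have hne : (Finset.univ.filter (fun a : Fin d => blk a = i)).Nonempty := by
      rw [← Finset.card_pos, hc]; omega
    obtain ⟨a, ha⟩ := hne
    exact ⟨a, (Finset.mem_filter.mp ha).2⟩
  obtain ⟨a0, ha0⟩ := hex 0 (by omega)
  obtain ⟨b1, hb1⟩ := hex 1 (by omega)
  obtain ⟨c2, hc2⟩ := hex 2 (by omega)
  set i0 : Fin n := ⟨0, by omega⟩ with hi0def
  have hi0 : (i0 : ℕ) = 0 := rfl
  have hw : ∀ a b : Fin d, blk a ≠ blk b → wvec n d blk a b ∈ L := fun a b h =>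
    AddSubgroup.subset_closure ⟨a, b, h, rfl⟩
  set φ := phiHom blk i0 with hφdef
  have hker : L ≤ φ.ker := by
    rw [hL]
    refine (AddSubgroup.closure_le _).2 ?_
    rintro v ⟨a, b, hab, rfl⟩
    rw [SetLike.mem_coe, AddMonoidHom.mem_ker]
    exact phiHom_wvec blk i0 hi0 a b hab
  set ρ := rhoHom i0 a0 with hρdef
  -- core generator computations
  have hδx : ∀ a : Fin d, ρ (φ (gxv n a)) - gxv n a ∈ L := by
    intro a
    by_cases ha : blk a = 0
    · rw [hφdef, phiHom_gx0 blk i0 hi0 a ha, hρdef, rhoHom_neg_one,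
        idA blk a0 b1 a ha0 hb1 ha]
      exact sub_mem (hw a0 b1 (by omega)) (hw a b1 (by omega))
    · obtain ⟨c, hc0, hca⟩ : ∃ c : Fin d, blk c ≠ 0 ∧ blk c ≠ blk a := by
        by_cases h1 : blk a = 1
        · exact ⟨c2, by omega, by omega⟩
        · exact ⟨b1, by omega, by omega⟩
      rw [hφdef, phiHom_gxi blk i0 hi0 a ha (hblkn a), hρdef, map_add,
        rhoHom_single, rhoHom_single,
        show vqv d i0 a0 i0 = -gxv n a0 - ∑ j ∈ Finset.univ.erase i0, gyv d j
          from if_pos rfl,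
        show vqv d i0 a0 (⟨blk a, hblkn a⟩ : Fin n) = gyv d (⟨blk a, hblkn a⟩ : Fin n)
          from if_neg (by simp only [ne_eq, Fin.ext_iff, hi0]; exact ha)]
      have hre : (-gxv n a0 - ∑ j ∈ Finset.univ.erase i0, gyv d j
            + gyv d (⟨blk a, hblkn a⟩ : Fin n)) - gxv n a
          = -(gxv n a + gxv n a0 + (∑ j ∈ Finset.univ.erase i0, gyv d j)
              - gyv d (⟨blk a, hblkn a⟩ : Fin n)) := by abel
      rw [hre, idB blk i0 hi0 a0 b1 c2 a c ha0 hb1 hc2 ha (hblkn a) hc0 hca]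
      exact neg_mem (add_mem (sub_mem (add_mem (sub_mem (hw a c (by omega))
        (hw a0 c (by omega))) (hw a0 b1 (by omega))) (hw b1 c2 (by omega)))
        (hw a0 c2 (by omega)))
  have hδy : ∀ i : Fin n, ρ (φ (gyv d i)) - gyv d i ∈ L := by
    intro i
    by_cases hi : i = i0
    · subst hi
      rw [hφdef, phiHom_gy0 blk i0 hi0, hρdef, map_sub, rhoHom_neg_one, rhoHom_single,
        show vqv d i0 a0 i0 = -gxv n a0 - ∑ j ∈ Finset.univ.erase i0, gyv d j
          from if_pos rfl]
      have hre : gxv n a0 - (-gxv n a0 - ∑ j ∈ Finset.univ.erase i0, gyv d j)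
            - gyv d i0
          = gxv n a0 + gxv n a0 + (∑ j ∈ Finset.univ.erase i0, gyv d j)
              - gyv d i0 := by abel
      rw [hre, idC blk i0 hi0 a0 b1 c2 ha0 hb1 hc2]
      exact add_mem (sub_mem (hw a0 b1 (by omega)) (hw b1 c2 (by omega)))
        (hw a0 c2 (by omega))
    · rw [hφdef, phiHom_gyi blk i0 hi0 i hi, hρdef, rhoHom_single,
        show vqv d i0 a0 i = gyv d i from if_neg hi, sub_self]
      exact zero_mem _
  have hT : ∀ v : (Fin d → ℤ) × (Fin n → ℤ), ρ (φ v) - v ∈ L := by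
    rintro ⟨x, y⟩
    rw [decomp ((x, y) : (Fin d → ℤ) × (Fin n → ℤ))]
    simp only [map_add, map_sum, map_zsmul]
    have hre : (∑ a, x a • ρ (φ (gxv n a)) + ∑ i, y i • ρ (φ (gyv d i)))
          - (∑ a, x a • gxv n a + ∑ i, y i • gyv d i)
        = ∑ a, x a • (ρ (φ (gxv n a)) - gxv n a)
          + ∑ i, y i • (ρ (φ (gyv d i)) - gyv d i) := by
      simp only [smul_sub, Finset.sum_sub_distrib]; abel
    rw [hre]
    exact add_mem (AddSubgroup.sum_mem _ fun a _ => AddSubgroup.zsmul_mem _ (hδx a) _)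
      (AddSubgroup.sum_mem _ fun i _ => AddSubgroup.zsmul_mem _ (hδy i) _)
  -- the two maps
  set mkL := QuotientAddGroup.mk' L with hmkL
  set φbar := QuotientAddGroup.lift L φ hker with hφbar
  set σ := mkL.comp ρ with hσ
  have hφvq : ∀ k : Fin n, φ (vqv d i0 a0 k) = Pi.single k 1 := by
    intro k
    by_cases hk : k = i0
    · subst hk
      rw [show vqv d i0 a0 i0 = -gxv n a0 - ∑ j ∈ Finset.univ.erase i0, gyv d j
          from if_pos rfl, map_sub, map_neg, hφdef, phiHom_gx0 blk i0 hi0 a0 ha0,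
        map_sum]
      have hsum : ∑ j ∈ Finset.univ.erase i0, phiHom blk i0 (gyv d j)
          = ∑ j ∈ Finset.univ.erase i0, (Pi.single j 1 : Fin n → ℤ) :=
        Finset.sum_congr rfl fun j hj =>
          phiHom_gyi blk i0 hi0 j (Finset.mem_erase.mp hj).1
      rw [hsum]
      funext m
      rw [Pi.sub_apply, Pi.neg_apply, Finset.sum_apply]
      simp only [Pi.single_apply, Finset.sum_ite_eq, Finset.mem_erase, Finset.mem_univ,
        and_true]
      split_ifs <;> simp_all
    · rw [show vqv d i0 a0 k = gyv d k from if_neg hk, hφdef, phiHom_gyi blk i0 hi0 k hk]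
  have h1 : ∀ c : Fin n → ℤ, φbar (σ c) = c := by
    intro c
    show φbar (mkL (ρ c)) = c
    have e1 : φbar (mkL (ρ c)) = φ (ρ c) := rfl
    have hc : ρ c = ∑ k, c k • vqv d i0 a0 k := rfl
    rw [e1, hc, map_sum]
    simp only [map_zsmul, hφvq]
    funext m
    rw [Finset.sum_apply]
    simp [Pi.single_apply, smul_eq_mul, mul_ite, Finset.sum_ite_eq]
  have h2 : ∀ v : (Fin d → ℤ) × (Fin n → ℤ), σ (φ v) = mkL v := by
    intro v
    have h0 : mkL (ρ (φ v) - v) = 0 := (QuotientAddGroup.eq_zero_iff _).2 (hT v)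
    rw [map_sub] at h0
    have := sub_eq_zero.mp h0
    rw [hσ, AddMonoidHom.comp_apply]
    exact this
  exact ⟨{ toFun := φbar, invFun := σ,
           left_inv := by
             intro q
             obtain ⟨v, rfl⟩ := QuotientAddGroup.mk'_surjective L q
             exact h2 v
           right_inv := h1,
           map_add' := map_add φbar }⟩
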